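/- Let θ_1,…,θ_n ∈ (0,π/2) with ∑_{i=1}^n θ_i = π. Then for all positive integers α, k with k ≥ 2, (∑_{i=1}^n tan θ_i)^{2α} − (n tan(π/n))^α (∑_{i=1}^n tan θ_i)^α ≤ (∑_{i=1}^n tan θ_i)^{kα} − (n tan(π/n))^{kα}, with equality if and only if θ_1 = ⋯ = θ_n = π/n. -/

import Mathlib

open Real

lemma strictConvexOn_tan' : StrictConvexOn ℝ (Set.Ioo 0 (π/2)) Real.tan := by
  apply strictConvexOn_of_deriv2_pos (convex_Ioo _ _)
  · intro x hx
    have hc : Real.cos x ≠ 0 :=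
      (Real.cos_pos_of_mem_Ioo ⟨by linarith [pi_pos, hx.1], hx.2⟩).ne'
    exact (Real.continuousAt_tan.2 hc).continuousWithinAt
  · intro x hx
    rw [interior_Ioo] at hx
    have hc : 0 < Real.cos x := Real.cos_pos_of_mem_Ioo ⟨by linarith [hx.1, Real.pi_pos], hx.2⟩
    have hs : 0 < Real.sin x := Real.sin_pos_of_pos_of_lt_pi hx.1 (by linarith [pi_pos, hx.2])
    have hdtan : deriv Real.tan = fun y => 1 / Real.cos y ^ 2 := funext Real.deriv_tan
    have hD : HasDerivAt (fun y => (Real.cos y ^ 2)⁻¹)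
        (-(2 * Real.cos x ^ 1 * -Real.sin x) / (Real.cos x ^ 2) ^ 2) x :=
      ((Real.hasDerivAt_cos x).pow 2).inv (pow_ne_zero 2 hc.ne')
    have : deriv^[2] Real.tan x = deriv (fun y => (Real.cos y ^ 2)⁻¹) x := by
      simp only [Function.iterate_succ, Function.iterate_zero, Function.comp_apply, id_eq]
      rw [hdtan]
      simp [one_div]
    rw [this, hD.deriv]
    have h4 : 0 < (Real.cos x ^ 2) ^ 2 := by positivity
    rw [div_pos_iff]
    left
    constructor
    · nlinarith
    · exact h4

lemma aux_ineq (s t : ℝ) (ht : 1 < t) (hts : t < s) :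
    ∀ k, 2 ≤ k → s ^ 2 - t * s < s ^ k - t ^ k := by
  intro k hk
  induction k, hk using Nat.le_induction with
  | base => nlinarith
  | succ k hk ih =>
    have h0t : (0:ℝ) ≤ t := by linarith
    have h1 : t ^ k * (t - 1) ≤ s ^ k * (s - 1) :=
      mul_le_mul (pow_le_pow_left₀ h0t hts.le k) (by linarith) (by linarith)
        (pow_nonneg (by linarith) k)
    nlinarith [pow_succ s k, pow_succ t k, h1, pow_nonneg h0t k]

open Real in
theorem stmt7 (n : ℕ) (hn : 3 ≤ n)
    (θ : Fin n → ℝ) (hθ : ∀ i, θ i ∈ Set.Ioo (0:ℝ) (π / 2))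
    (hsum : ∑ i, θ i = π) (α k : ℕ) (hα : 0 < α) (hk : 2 ≤ k) :
    (∑ i, tan (θ i)) ^ (2 * α) - ((n : ℝ) * tan (π / n)) ^ α * (∑ i, tan (θ i)) ^ α
      ≤ (∑ i, tan (θ i)) ^ (k * α) - ((n : ℝ) * tan (π / n)) ^ (k * α)
    ∧ ((∑ i, tan (θ i)) ^ (2 * α) - ((n : ℝ) * tan (π / n)) ^ α * (∑ i, tan (θ i)) ^ α
        = (∑ i, tan (θ i)) ^ (k * α) - ((n : ℝ) * tan (π / n)) ^ (k * α)
      ↔ ∀ i, θ i = π / n) := by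
  have hn0 : (0:ℝ) < n := by positivity
  have hπ := Real.pi_pos
  set S := ∑ i, tan (θ i) with hS
  set T := (n : ℝ) * tan (π / n) with hT
  -- basic facts about π / n
  have hπn : π / n ∈ Set.Ioo (0:ℝ) (π / 2) := by
    constructor
    · positivity
    · rw [div_lt_div_iff₀ hn0 two_pos]
      nlinarith [(show (3:ℝ) ≤ n by exact_mod_cast hn)]
  have hTgt1 : (1:ℝ) < T := by
    have : π / n < tan (π / n) := Real.lt_tan hπn.1 hπn.2
    have : π < T := by
      rw [hT]
      calc π = n * (π / n) := by field_simp
        _ < n * tan (π / n) := by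
          apply mul_lt_mul_of_pos_left this hn0
    linarith [Real.pi_gt_three]
  -- Jensen setup
  have hw1 : ∑ _i : Fin n, (n : ℝ)⁻¹ = 1 := by
    simp [Finset.card_univ]
    field_simp
  have hcenter : ∑ i : Fin n, (n : ℝ)⁻¹ • θ i = π / n := by
    rw [← Finset.smul_sum, hsum, smul_eq_mul]
    field_simp
  have hmem : ∀ i ∈ Finset.univ, θ i ∈ Set.Ioo (0:ℝ) (π/2) := fun i _ => hθ i
  have hTS : T ≤ S := by
    have := strictConvexOn_tan'.convexOn.map_sum_le
      (w := fun _ => (n:ℝ)⁻¹) (p := θ) (t := Finset.univ)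
      (fun i _ => by positivity) hw1 hmem
    rw [hcenter] at this
    simp only [smul_eq_mul] at this
    rw [← Finset.mul_sum] at this
    rw [hT]
    calc (n:ℝ) * tan (π / n) ≤ n * ((n:ℝ)⁻¹ * S) :=
          mul_le_mul_of_nonneg_left this hn0.le
      _ = S := by field_simp
  -- strict case
  by_cases hall : ∀ i, θ i = π / n
  · have hSeq : S = T := by
      rw [hS, hT]
      have : ∀ i : Fin n, tan (θ i) = tan (π / n) := fun i => by rw [hall i]
      rw [Finset.sum_congr rfl (fun i _ => this i)]
      simp [Finset.card_univ, mul_comm]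
    rw [hSeq]
    have h1 : T ^ α * T ^ α = T ^ (2 * α) := by rw [← pow_add]; ring_nf
    constructor
    · rw [h1]; simp
    · rw [h1]
      constructor
      · intro _; exact hall
      · intro _; ring
  · -- strict inequality S > T
    have hTS' : T < S := by
      rcases lt_or_eq_of_le hTS with h | h
      · exact h
      · exfalso
        -- S = T forces all θ i equal, hence all π / n
        have hne : ∃ j ∈ Finset.univ, ∃ l ∈ Finset.univ, θ j ≠ θ l := by
          by_contra hcon
          push_neg at hcon
          apply hall
          intro i
          have hall' : ∀ j : Fin n, θ j = θ i := fun j =>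
            hcon j (Finset.mem_univ j) i (Finset.mem_univ i)
          have : ∑ j, θ j = n * θ i := by
            rw [Finset.sum_congr rfl (fun j _ => hall' j)]
            simp [Finset.card_univ]
          rw [hsum] at this
          field_simp [this]
          linarith
        have hstrict := strictConvexOn_tan'.map_sum_lt
          (w := fun _ => (n:ℝ)⁻¹) (p := θ) (t := Finset.univ)
          (fun i _ => by positivity) hw1 hmem hne
        rw [hcenter] at hstrict
        simp only [smul_eq_mul] at hstrict
        rw [← Finset.mul_sum] at hstrict
        have : T < S := by
          rw [hT]
          calc (n:ℝ) * tan (π / n) < n * ((n:ℝ)⁻¹ * S) :=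
                mul_lt_mul_of_pos_left hstrict hn0
            _ = S := by field_simp
        rw [h] at this
        exact lt_irrefl _ this
    have hT0 : (0:ℝ) ≤ T := by linarith
    have ht1 : (1:ℝ) < T ^ α := one_lt_pow₀ hTgt1 hα.ne'
    have hts : T ^ α < S ^ α := pow_lt_pow_left₀ hTS' hT0 hα.ne'
    have key := aux_ineq (S ^ α) (T ^ α) ht1 hts k hk
    have e1 : S ^ (2 * α) = (S ^ α) ^ 2 := by rw [pow_mul']
    have e2 : S ^ (k * α) = (S ^ α) ^ k := by rw [pow_mul']
    have e3 : T ^ (k * α) = (T ^ α) ^ k := by rw [pow_mul']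
    rw [e1, e2, e3]
    have hlt : (S ^ α) ^ 2 - T ^ α * S ^ α < (S ^ α) ^ k - (T ^ α) ^ k := by
      linarith [key]
    exact ⟨hlt.le, iff_of_false hlt.ne hall⟩
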